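/- Let η ∈ (0,1), ᾱ_hat > 0, and (δ^k)_{k≥0} a summable nonnegative sequence. Let (α^k)_{k≥0} be positive reals such that for each k in an index set 𝒦 one has α^k ≤ η·α^{k-1} + δ^k, and for k ∉ 𝒦 one has α^k ≤ α^{k-1} + δ^k, and suppose α^k ≥ ᾱ > 0 for all k (uniform lower bound). Then 𝒦 is finite. -/
import Mathlib


/-- finiteness of the decrease events. If `α k ≥ ᾱ > 0` uniformly,
`α k ≤ η α (k-1) + δ k` for `k ∈ 𝒦` (with `η ∈ (0,1)`), `α k ≤ α (k-1) + δ k`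
otherwise, and `δ` is summable and nonnegative, then `𝒦` is finite. -/
theorem stmt12 (η αbar : ℝ) (hη : 0 < η ∧ η < 1) (hαbar : 0 < αbar)
    (δ : ℕ → ℝ) (hδ : ∀ k, 0 ≤ δ k) (hsum : Summable δ)
    (α : ℕ → ℝ) (K : Set ℕ)
    (hdec : ∀ k, 1 ≤ k → k ∈ K → α k ≤ η * α (k - 1) + δ k)
    (hinc : ∀ k, 1 ≤ k → k ∉ K → α k ≤ α (k - 1) + δ k)
    (hlow : ∀ k, αbar ≤ α k) :
    K.Finite := by
  classical
  obtain ⟨hη0, hη1⟩ := hη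
  set c := (1 - η) * αbar with hc
  have hc0 : 0 < c := mul_pos (by linarith) hαbar
  set S := ∑' k, δ k with hS
  have key : ∀ N, α N + c * ((Finset.Icc 1 N).filter (· ∈ K)).card
      ≤ α 0 + ∑ k ∈ Finset.Icc 1 N, δ k := by
    intro N
    induction N with
    | zero => simp
    | succ n ih =>
      have hins : Finset.Icc 1 (n + 1) = insert (n + 1) (Finset.Icc 1 n) := by
        rw [← Finset.insert_Icc_right_eq_Icc_add_one (by omega)]
      have hnot : (n + 1) ∉ Finset.Icc 1 n := by simp
      have hsumin : ∑ k ∈ Finset.Icc 1 (n + 1), δ k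
          = δ (n + 1) + ∑ k ∈ Finset.Icc 1 n, δ k := by
        rw [hins, Finset.sum_insert hnot]
      by_cases hK : (n + 1) ∈ K
      · have hstep := hdec (n + 1) (by omega) hK
        simp only [Nat.add_sub_cancel] at hstep
        have hcard : ((Finset.Icc 1 (n + 1)).filter (· ∈ K)).card
            = ((Finset.Icc 1 n).filter (· ∈ K)).card + 1 := by
          rw [hins, Finset.filter_insert, if_pos hK,
            Finset.card_insert_of_notMem (fun h => hnot (Finset.mem_of_mem_filter _ h))]
        have hdrop : η * α n ≤ α n - c := by
          have := hlow n
          nlinarith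
        rw [hcard, hsumin]
        push_cast
        linarith
      · have hstep := hinc (n + 1) (by omega) hK
        simp only [Nat.add_sub_cancel] at hstep
        have hcard : ((Finset.Icc 1 (n + 1)).filter (· ∈ K)).card
            = ((Finset.Icc 1 n).filter (· ∈ K)).card := by
          rw [hins, Finset.filter_insert, if_neg hK]
        rw [hcard, hsumin]
        linarith
  have hbound : ∀ N, (((Finset.Icc 1 N).filter (· ∈ K)).card : ℝ)
      ≤ (α 0 + S - αbar) / c := by
    intro N
    have h1 : ∑ k ∈ Finset.Icc 1 N, δ k ≤ S :=
      Summable.sum_le_tsum _ (fun k _ => hδ k) hsum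
    have h2 := key N
    have h3 := hlow N
    rw [le_div_iff₀ hc0]
    nlinarith
  by_contra hK
  have hinf : (K \ {0}).Infinite := Set.Infinite.diff hK (Set.finite_singleton 0)
  set B := ⌈(α 0 + S - αbar) / c⌉₊ with hB
  obtain ⟨s, hsub, hcard⟩ := hinf.exists_subset_card_eq (B + 1)
  set N := s.sup id with hN
  have hsub2 : s ⊆ (Finset.Icc 1 N).filter (· ∈ K) := by
    intro x hx
    have hxK := hsub hx
    simp only [Set.mem_diff, Set.mem_singleton_iff] at hxK
    refine Finset.mem_filter.mpr ⟨Finset.mem_Icc.mpr ⟨by omega, Finset.le_sup (f := id) hx⟩, hxK.1⟩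
  have h1 : s.card ≤ ((Finset.Icc 1 N).filter (· ∈ K)).card := Finset.card_le_card hsub2
  have h2 := hbound N
  have h3 : (s.card : ℝ) ≤ (α 0 + S - αbar) / c := le_trans (by exact_mod_cast h1) h2
  have h4 : (s.card : ℝ) ≤ (B : ℝ) := le_trans h3 (Nat.le_ceil _)
  have h5 : s.card ≤ B := by exact_mod_cast h4
  omega
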